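/- Let P_1,…,P_s ∈ ℤ[x] (s ≥ 2) be nonzero one-variable polynomials and let H be the minimum of the normalized heights H(P_1),…,H(P_s). Then P_1,…,P_s are coprime in ℚ[x] if and only if there exists an integer n ≥ 2H + 3 such that gcd(P_1(n),…,P_s(n)) ≤ √n. -/

import Mathlib

open Polynomial

lemma ratDenMul (a : ℚ) : (a.den : ℚ) * a = (a.num : ℚ) := by
  rw [mul_comm]
  rw_mod_cast [Rat.mul_den_eq_num]

lemma clearDenom (q : Polynomial ℚ) : ∃ (m : ℤ) (A : Polynomial ℤ), m ≠ 0 ∧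
    A.map (Int.castRingHom ℚ) = Polynomial.C (m : ℚ) * q := by
  induction q using Polynomial.induction_on with
  | C a =>
    refine ⟨a.den, C a.num, by exact_mod_cast a.den_nz, ?_⟩
    rw [map_C, ← C_mul]
    congr 1
    push_cast
    exact (ratDenMul a).symm
  | add p q hp hq =>
    obtain ⟨m1, A1, hm1, h1⟩ := hp
    obtain ⟨m2, A2, hm2, h2⟩ := hq
    refine ⟨m1 * m2, C m2 * A1 + C m1 * A2, mul_ne_zero hm1 hm2, ?_⟩
    rw [Polynomial.map_add, Polynomial.map_mul, Polynomial.map_mul, map_C, map_C, h1, h2]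
    simp only [eq_intCast, Int.cast_mul, C_mul]
    ring
  | monomial n a ih =>
    obtain ⟨m, A, hm, h⟩ := ih
    refine ⟨m, A * X, hm, ?_⟩
    rw [Polynomial.map_mul, map_X, h]
    ring

lemma rootBound (p : Polynomial ℤ) (hp : p ≠ 0) (B : ℚ) (hB0 : 0 ≤ B)
    (hB : ∀ j < p.natDegree, |((p.coeff j : ℤ) : ℚ)| ≤ B * |((p.leadingCoeff : ℤ) : ℚ)|)
    (z : ℂ) (hz : (p.map (Int.castRingHom ℂ)).IsRoot z) :
    ‖z‖ ≤ 1 + (B : ℝ) := by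
  by_contra hcon
  push_neg at hcon
  have hB0' : (0:ℝ) ≤ (B:ℝ) := by exact_mod_cast hB0
  set d := p.natDegree with hd
  set r := ‖z‖ with hr
  have hr1 : (1 : ℝ) < r := by linarith
  have hmapdeg : (p.map (Int.castRingHom ℂ)).natDegree = d :=
    p.natDegree_map_eq_of_injective Int.cast_injective
  have heval : ∑ i ∈ Finset.range (d + 1), ((p.coeff i : ℂ)) * z ^ i = 0 := by
    have := hz
    rw [IsRoot, eval_eq_sum_range, hmapdeg] at this
    simpa [coeff_map] using this
  rw [Finset.sum_range_succ] at heval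
  have hkey : (p.coeff d : ℂ) * z ^ d = -∑ i ∈ Finset.range d, ((p.coeff i : ℂ)) * z ^ i := by
    linear_combination heval
  have habs : (|p.coeff d| : ℝ) * r ^ d ≤ ∑ i ∈ Finset.range d, (|p.coeff i| : ℝ) * r ^ i := by
    calc (|p.coeff d| : ℝ) * r ^ d = ‖(p.coeff d : ℂ) * z ^ d‖ := by
          simp [hr, norm_mul, Complex.norm_intCast]
      _ = ‖∑ i ∈ Finset.range d, ((p.coeff i : ℂ)) * z ^ i‖ := by
          rw [hkey, norm_neg]
      _ ≤ ∑ i ∈ Finset.range d, ‖((p.coeff i : ℂ)) * z ^ i‖ :=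
          norm_sum_le _ _
      _ = ∑ i ∈ Finset.range d, (|p.coeff i| : ℝ) * r ^ i := by
          refine Finset.sum_congr rfl fun i _ => ?_
          simp [hr, norm_mul, Complex.norm_intCast]
  have hcoef : ∀ i < d, (|p.coeff i| : ℝ) ≤ (B : ℝ) * (|p.coeff d| : ℝ) := by
    intro i hi
    have h1 := hB i hi
    rw [Polynomial.leadingCoeff] at h1
    have h2 : (|(p.coeff i : ℚ)| : ℝ) ≤ ((B * |(p.coeff d : ℚ)| : ℚ) : ℝ) := by exact_mod_cast h1
    push_cast at h2 ⊢
    simpa using h2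
  have hlc : (1 : ℝ) ≤ (|p.coeff d| : ℝ) := by
    have h3 : p.coeff d ≠ 0 := by
      rw [hd, ← Polynomial.leadingCoeff]
      exact leadingCoeff_ne_zero.mpr hp
    exact_mod_cast Int.one_le_abs (by simpa using h3)
  have hsum2 : ∑ i ∈ Finset.range d, (|p.coeff i| : ℝ) * r ^ i
      ≤ (B : ℝ) * (|p.coeff d| : ℝ) * ∑ i ∈ Finset.range d, r ^ i := by
    rw [Finset.mul_sum]
    refine Finset.sum_le_sum fun i hi => ?_
    have := hcoef i (Finset.mem_range.mp hi)
    have hrpow : (0:ℝ) ≤ r ^ i := by positivity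
    nlinarith
  have hg : ∑ i ∈ Finset.range d, r ^ i = (r ^ d - 1) / (r - 1) := geom_sum_eq (ne_of_gt hr1) d
  set a := (|p.coeff d| : ℝ)
  set X := r ^ d with hX
  have hX1 : (1:ℝ) ≤ X := one_le_pow₀ (le_of_lt hr1)
  have hfin : a * X ≤ (B:ℝ) * a * ((X - 1)/(r-1)) := by
    rw [← hg]; exact le_trans habs hsum2
  have hr0 : (0:ℝ) < r - 1 := by linarith
  have h2 : a * X * (r - 1) ≤ (B:ℝ) * a * (X - 1) := by
    rw [div_eq_inv_mul, ← mul_assoc] at hfin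
    calc a * X * (r-1) ≤ (B:ℝ) * a * (r-1)⁻¹ * (X-1) * (r-1) :=
          mul_le_mul_of_nonneg_right hfin (le_of_lt hr0)
      _ = (B:ℝ) * a * (X-1) * ((r-1)⁻¹ * (r-1)) := by ring
      _ = (B:ℝ) * a * (X-1) := by rw [inv_mul_cancel₀ (ne_of_gt hr0), mul_one]
  have haX : (0:ℝ) < a * X := by nlinarith
  have hrb : (0:ℝ) < r - 1 - B := by linarith
  nlinarith [mul_pos haX hrb, mul_nonneg hB0' (le_trans zero_le_one hlc)]

lemma multisetProdBound (m : Multiset ℝ) (c : ℝ) (hc : 0 ≤ c) (h : ∀ x ∈ m, c ≤ x) :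
    c ^ Multiset.card m ≤ m.prod := by
  induction m using Multiset.induction with
  | empty => simp
  | cons a t ih =>
    rw [Multiset.prod_cons, Multiset.card_cons, pow_succ, mul_comm (c ^ _) c]
    exact mul_le_mul (h a (Multiset.mem_cons_self a t))
      (ih fun x hx => h x (Multiset.mem_cons_of_mem hx))
      (pow_nonneg hc _) (le_trans hc (h a (Multiset.mem_cons_self a t)))

lemma evalLowerBound (p : Polynomial ℤ) (hp : p ≠ 0) (B : ℚ) (hB0 : 0 ≤ B)
    (hroot : ∀ z : ℂ, (p.map (Int.castRingHom ℂ)).IsRoot z → ‖z‖ ≤ 1 + (B:ℝ))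
    (n : ℤ) (hn : 2*B + 3 ≤ (n:ℚ)) :
    (((n:ℝ)+1)/2) ^ p.natDegree ≤ |((p.eval n : ℤ) : ℝ)| := by
  have hinj : Function.Injective ⇑(Int.castRingHom ℂ) := by
    rw [Int.coe_castRingHom]; exact Int.cast_injective
  set q := p.map (Int.castRingHom ℂ) with hq
  have hq0 : q ≠ 0 := by
    simpa [hq, Polynomial.map_eq_zero_iff hinj] using hp
  have hqdeg : q.natDegree = p.natDegree := p.natDegree_map_eq_of_injective Int.cast_injective
  have hsplit : q.Splits := IsAlgClosed.splits q
  have hfact := hsplit.eq_prod_roots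
  have hnR : 2*(B:ℝ) + 3 ≤ (n:ℝ) := by exact_mod_cast hn
  have hB0' : (0:ℝ) ≤ (B:ℝ) := by exact_mod_cast hB0
  have hc2 : (2:ℝ) ≤ ((n:ℝ)+1)/2 := by linarith
  set c : ℝ := ((n:ℝ)+1)/2 with hc
  have hcard : Multiset.card q.roots = p.natDegree := by
    rw [← hqdeg]; exact (splits_iff_card_roots.mp hsplit)
  have heval : ((p.eval n : ℤ) : ℂ) = q.eval (n : ℂ) := by
    rw [hq, eval_intCast_map]; rfl
  have habs : |((p.eval n : ℤ) : ℝ)| = ‖q.eval (n:ℂ)‖ := by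
    rw [← heval, Complex.norm_intCast]
  rw [habs]
  have : q.eval (n:ℂ) = q.leadingCoeff * ((q.roots.map fun a => (n:ℂ) - a)).prod := by
    conv_lhs => rw [hfact]
    rw [eval_mul, eval_C, eval_multiset_prod]
    congr 1
    rw [Multiset.map_map]
    exact congrArg Multiset.prod (Multiset.map_congr rfl fun a _ => by simp [Function.comp])
  rw [this, norm_mul, show ‖(q.roots.map fun a => (n:ℂ) - a).prod‖ = ((q.roots.map fun a => (n:ℂ) - a).map norm).prod from map_multiset_prod (normHom (α := ℂ)) _, Multiset.map_map]
  have hlc : (1:ℝ) ≤ ‖q.leadingCoeff‖ := by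
    rw [hq, leadingCoeff_map_of_injective hinj, eq_intCast, Complex.norm_intCast]
    exact_mod_cast Int.one_le_abs (leadingCoeff_ne_zero.mpr hp)
  have hprod : c ^ p.natDegree ≤ (q.roots.map (norm ∘ fun a => (n:ℂ) - a)).prod := by
    rw [← hcard]
    have := multisetProdBound (q.roots.map (norm ∘ fun a => (n:ℂ) - a)) c (by linarith)
      (fun x hx => ?_)
    · simpa using this
    · obtain ⟨z, hz, rfl⟩ := Multiset.mem_map.mp hx
      have hzr : ‖z‖ ≤ 1 + (B:ℝ) :=
        hroot z ((mem_roots hq0).mp hz)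
      have h1 : ‖(n:ℂ)‖ - ‖z‖ ≤ ‖(n:ℂ) - z‖ := by
        exact norm_sub_norm_le (n:ℂ) z
      have hnabs : ‖(n:ℂ)‖ = (n:ℝ) := by
        rw [Complex.norm_intCast]
        rw [abs_of_nonneg (by exact_mod_cast (by nlinarith : (0:ℝ) ≤ (n:ℝ)))]
      simp only [Function.comp]
      rw [hnabs] at h1
      have hB0' : (0:ℝ) ≤ B := by exact_mod_cast hB0
      calc c ≤ (n:ℝ) - (1 + (B:ℝ)) := by rw [hc]; linarith
        _ ≤ (n:ℝ) - ‖z‖ := by linarith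
        _ ≤ ‖(n:ℂ) - z‖ := h1
  calc c ^ p.natDegree ≤ (q.roots.map (norm ∘ fun a => (n:ℂ) - a)).prod := hprod
    _ ≤ ‖q.leadingCoeff‖ * (q.roots.map (norm ∘ fun a => (n:ℂ) - a)).prod := by
        have hpos : (0:ℝ) ≤ (q.roots.map (norm ∘ fun a => (n:ℂ) - a)).prod := by
          refine Multiset.prod_nonneg fun x hx => ?_
          obtain ⟨z, hz, rfl⟩ := Multiset.mem_map.mp hx
          exact norm_nonneg _
        nlinarith
    _ = _ := rfl

/-- Coprimality criterion in one variable: nonzero polynomials `P_1,…,P_s ∈ ℤ[x]`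
are coprime over ℚ iff there is an integer `n ≥ 2H+3` (with `H` the minimum of
the normalized heights) such that `gcd(P_1(n),…,P_s(n)) ≤ √n`. -/
theorem stmt6 (s : ℕ) (hs : 2 ≤ s)
    (P : Fin s → Polynomial ℤ) (hP : ∀ i, P i ≠ 0)
    (Hgt : Fin s → ℚ)
    (hHgt : ∀ i, IsGreatest
      (insert 0 ((fun j => |((P i).coeff j : ℚ)| / |((P i).leadingCoeff : ℚ)|) ''
        {j : ℕ | j < (P i).natDegree})) (Hgt i))
    (H : ℚ) (hH : IsLeast (Set.range Hgt) H) :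
    (∀ D : Polynomial ℚ, (∀ i, D ∣ (P i).map (Int.castRingHom ℚ)) → D.natDegree = 0) ↔
      ∃ n : ℤ, 2 * H + 3 ≤ (n : ℚ) ∧
        ((Finset.univ.gcd fun i => (P i).eval n : ℤ) : ℝ) ≤ Real.sqrt (n : ℝ) := by
  have hinjQ : Function.Injective ⇑(Int.castRingHom ℚ) := by
    rw [Int.coe_castRingHom]; exact Int.cast_injective
  set f : Fin s → Polynomial ℚ := fun i => (P i).map (Int.castRingHom ℚ) with hf
  have hf0 : ∀ i, f i ≠ 0 := fun i => by
    simpa [hf, Polynomial.map_eq_zero_iff hinjQ] using hP i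
  obtain ⟨i0, hi0⟩ := hH.1
  have hH0 : 0 ≤ H := by
    rw [← hi0]
    exact (hHgt i0).2 (Set.mem_insert 0 _)
  constructor
  · intro hcop
    set I : Ideal (Polynomial ℚ) := Ideal.span (Set.range f) with hI
    have hprin : I.IsPrincipal := IsPrincipalIdealRing.principal I
    set g : Polynomial ℚ := Submodule.IsPrincipal.generator I with hg
    have hmem : ∀ i, f i ∈ I := fun i => Ideal.subset_span ⟨i, rfl⟩
    have hdvd : ∀ i, g ∣ f i := fun i => by
      rw [← Ideal.mem_span_singleton, Ideal.span_singleton_generator I]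
      exact hmem i
    have hgdeg : g.natDegree = 0 := hcop g hdvd
    have hg0 : g ≠ 0 := by
      intro h
      exact hf0 ⟨0, by omega⟩ (zero_dvd_iff.mp (h ▸ hdvd ⟨0, by omega⟩))
    have hunit : IsUnit g := by
      obtain ⟨a, ha⟩ := Polynomial.natDegree_eq_zero.mp hgdeg
      rw [← ha]
      exact isUnit_C.mpr (isUnit_iff_ne_zero.mpr (fun h => hg0 (by rw [← ha, h, map_zero])))
    have htop : I = ⊤ := by
      rw [← Ideal.span_singleton_generator I, Ideal.span_singleton_eq_top]
      exact hunit
    have h1 : (1 : Polynomial ℚ) ∈ Ideal.span (Set.range f) := by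
      rw [← hI, htop]; trivial
    obtain ⟨c, hc⟩ := Ideal.mem_span_range_iff_exists_fun.mp h1
    choose m A hm hA using fun i => clearDenom (c i)
    set M : ℤ := ∏ i, m i with hMdef
    have hM : M ≠ 0 := Finset.prod_ne_zero_iff.mpr fun i _ => hm i
    set B : Fin s → Polynomial ℤ :=
      fun i => C (∏ j ∈ Finset.univ.erase i, m j) * (A i * P i) with hB
    have key : (∑ i, B i) = C M := by
      apply Polynomial.map_injective (Int.castRingHom ℚ) hinjQ
      rw [Polynomial.map_sum, map_C]
      have step : ∀ i, (B i).map (Int.castRingHom ℚ) = C ((M : ℤ) : ℚ) * (c i * f i) := by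
        intro i
        rw [hB]
        simp only
        rw [Polynomial.map_mul, Polynomial.map_mul, map_C, hA i]
        have hMi : (∏ j ∈ Finset.univ.erase i, m j) * m i = M :=
          Finset.prod_erase_mul Finset.univ m (Finset.mem_univ i)
        rw [← hMi]
        simp only [eq_intCast, Int.cast_mul, C_mul]
        ring
      rw [Finset.sum_congr rfl (fun i _ => step i), ← Finset.mul_sum, hc, mul_one, eq_intCast]
    set n : ℤ := max (⌈2 * H + 3⌉) (M ^ 2) with hn
    refine ⟨n, ?_, ?_⟩
    · calc (2 * H + 3 : ℚ) ≤ (⌈2 * H + 3⌉ : ℤ) := Int.le_ceil _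
        _ ≤ ((n : ℤ) : ℚ) := by exact_mod_cast le_max_left _ _
    · set gn : ℤ := Finset.univ.gcd fun i => (P i).eval n with hgn
      have hgnd : gn ∣ M := by
        have hsum : ∑ i, (B i).eval n = M := by
          rw [← Polynomial.eval_finset_sum, key, eval_C]
        rw [← hsum]
        refine Finset.dvd_sum fun i _ => ?_
        have : (P i).eval n ∣ (B i).eval n := by
          rw [hB]
          simp only
          rw [eval_mul, eval_mul]
          exact ⟨(C (∏ j ∈ Finset.univ.erase i, m j)).eval n * (A i).eval n, by ring⟩
        exact dvd_trans (Finset.gcd_dvd (Finset.mem_univ i)) this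
      have hgnle : gn ≤ |M| := Int.le_of_dvd (abs_pos.mpr hM) ((dvd_abs _ _).mpr hgnd)
      have hnM : (M ^ 2 : ℤ) ≤ n := le_max_right _ _
      have h0n : (0:ℝ) ≤ (n:ℝ) := by
        have : (0:ℤ) ≤ n := le_trans (sq_nonneg M) hnM
        exact_mod_cast this
      calc (gn : ℝ) ≤ (|M| : ℝ) := by exact_mod_cast hgnle
        _ ≤ Real.sqrt (n:ℝ) := by
          rw [Real.le_sqrt (by positivity) h0n]
          have h' : (|M|:ℤ)^2 ≤ n := by rw [sq_abs]; exact hnM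
          exact_mod_cast h'
  · rintro ⟨n, hn, hle⟩ D hD
    by_contra hdeg
    -- basic facts
    have hD0 : D ≠ 0 := fun h => hdeg (by rw [h, natDegree_zero])
    have hn3 : (3:ℚ) ≤ (n:ℚ) := by linarith
    have hn3' : (3:ℤ) ≤ n := by exact_mod_cast hn3
    have hnR : 2 * (H:ℝ) + 3 ≤ (n:ℝ) := by exact_mod_cast hn
    -- height bound for P i0
    have hBnd : ∀ j < (P i0).natDegree,
        |((P i0).coeff j : ℚ)| ≤ H * |((P i0).leadingCoeff : ℚ)| := by
      intro j hj
      have hlc0 : ((P i0).leadingCoeff : ℚ) ≠ 0 := by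
        exact_mod_cast leadingCoeff_ne_zero.mpr (hP i0)
      have hlcpos : (0:ℚ) < |((P i0).leadingCoeff : ℚ)| := abs_pos.mpr hlc0
      have := (hHgt i0).2 (Set.mem_insert_of_mem 0 ⟨j, hj, rfl⟩)
      rw [hi0] at this
      rw [div_le_iff₀ hlcpos] at this
      linarith [this]
    have hrootP : ∀ z : ℂ, ((P i0).map (Int.castRingHom ℂ)).IsRoot z →
        ‖z‖ ≤ 1 + (H:ℝ) := rootBound (P i0) (hP i0) H hH0 hBnd
    -- construct the integer divisor E
    obtain ⟨m, A, hm, hA⟩ := clearDenom D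
    have hCm : (m : ℚ) ≠ 0 := by exact_mod_cast hm
    have hA0 : A ≠ 0 := by
      intro h
      rw [h, Polynomial.map_zero] at hA
      exact hD0 (by
        have := hA.symm
        rcases mul_eq_zero.mp this with h' | h'
        · exact absurd (C_eq_zero.mp h') hCm
        · exact h')
    set E : Polynomial ℤ := A.primPart with hE
    have hEdegD : E.natDegree = D.natDegree := by
      rw [hE, natDegree_primPart]
      have : (A.map (Int.castRingHom ℚ)).natDegree = A.natDegree :=
        A.natDegree_map_eq_of_injective hinjQ
      rw [← this, hA, natDegree_C_mul hCm]
    have hEdeg : E.natDegree ≠ 0 := by rw [hEdegD]; exact hdeg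
    have hE0 : E ≠ 0 := A.primPart_ne_zero
    have hEdvd : ∀ i, E ∣ P i := by
      intro i
      have h1 : E.map (Int.castRingHom ℚ) ∣ A.map (Int.castRingHom ℚ) :=
        Polynomial.map_dvd _ (A.primPart_dvd)
      rw [hA] at h1
      have h2 : E.map (Int.castRingHom ℚ) ∣ C (m:ℚ) * f i :=
        dvd_trans h1 (mul_dvd_mul_left _ (hD i))
      have h3 : E.map (Int.castRingHom ℚ) ∣ f i :=
        ((isUnit_C.mpr (isUnit_iff_ne_zero.mpr hCm)).dvd_mul_left).mp h2
      have h4 : f i = C (((P i).content : ℚ)) * ((P i).primPart.map (Int.castRingHom ℚ)) := by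
        rw [hf]
        simp only
        conv_lhs => rw [(P i).eq_C_content_mul_primPart]
        rw [Polynomial.map_mul, map_C]
        simp
      have hcont : (((P i).content : ℚ)) ≠ 0 := by
        exact_mod_cast (fun h => hP i (content_eq_zero_iff.mp h))
      have h5 : E.map (Int.castRingHom ℚ) ∣ (P i).primPart.map (Int.castRingHom ℚ) := by
        rw [h4] at h3
        exact ((isUnit_C.mpr (isUnit_iff_ne_zero.mpr hcont)).dvd_mul_left).mp h3
      have h6 : E ∣ (P i).primPart :=
        (IsPrimitive.Int.dvd_iff_map_cast_dvd_map_cast E (P i).primPart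
          A.isPrimitive_primPart).mpr h5
      exact dvd_trans h6 (P i).primPart_dvd
    -- roots of E are bounded
    have hEroot : ∀ z : ℂ, (E.map (Int.castRingHom ℂ)).IsRoot z →
        ‖z‖ ≤ 1 + (H:ℝ) := by
      intro z hz
      obtain ⟨q, hq⟩ := Polynomial.map_dvd (Int.castRingHom ℂ) (hEdvd i0)
      refine hrootP z ?_
      rw [IsRoot, hq, eval_mul, hz, zero_mul]
    have hElow := evalLowerBound E hE0 H hH0 hEroot n hn
    have hPlow := evalLowerBound (P i0) (hP i0) H hH0 hrootP n hn
    set cR : ℝ := ((n:ℝ) + 1) / 2 with hcR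
    have hc2 : (2:ℝ) ≤ cR := by
      rw [hcR]
      have : (3:ℝ) ≤ (n:ℝ) := by exact_mod_cast hn3'
      linarith
    have hPne : (P i0).eval n ≠ 0 := by
      intro h
      rw [h] at hPlow
      simp only [Int.cast_zero, abs_zero] at hPlow
      have : (0:ℝ) < cR ^ (P i0).natDegree := by positivity
      linarith
    set gn : ℤ := Finset.univ.gcd fun i => (P i).eval n with hgn
    have hgnne : gn ≠ 0 := by
      intro h
      rw [hgn] at h
      exact hPne (Finset.gcd_eq_zero_iff.mp h i0 (Finset.mem_univ i0))
    have hgnnn : 0 ≤ gn := by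
      rw [hgn, ← Finset.normalize_gcd]
      rw [← Int.abs_eq_normalize]
      exact abs_nonneg _
    have hgnpos : 0 < gn := lt_of_le_of_ne hgnnn (Ne.symm hgnne)
    have hEdvdgn : E.eval n ∣ gn :=
      Finset.dvd_gcd fun i _ => eval_dvd (hEdvd i)
    have habsle : |E.eval n| ≤ gn := Int.le_of_dvd hgnpos ((abs_dvd _ _).mpr hEdvdgn)
    -- final contradiction
    have hclow : cR ≤ ((|E.eval n| : ℤ) : ℝ) := by
      have h1 : cR ≤ cR ^ E.natDegree := le_self_pow₀ (by linarith) hEdeg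
      have h2 := le_trans h1 hElow
      rw [Int.cast_abs]
      exact h2
    have hsq : Real.sqrt (n:ℝ) < cR := by
      rw [Real.sqrt_lt' (by linarith)]
      have h3 : (3:ℝ) ≤ (n:ℝ) := by exact_mod_cast hn3'
      rw [hcR]
      nlinarith
    have : (gn : ℝ) ≤ Real.sqrt (n:ℝ) := hle
    have : cR ≤ (gn : ℝ) := le_trans hclow (by exact_mod_cast habsle)
    linarith
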